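/- Let f : ℝ^d → ℝ be twice continuously differentiable with a-Hölder continuous Hessian: there exist a > 0 and L_a > 0 such that |uᵀ(∇²f(x) − ∇²f(y))u| ≤ L_a‖x−y‖^a‖u‖² for all x, y, u ∈ ℝ^d. Then for every x ∈ ℝ^d, every nonzero u ∈ ℝ^d, and every r > 0, the first-order central finite difference satisfies |d_r(x;u) − uᵀ∇f(x)| ≤ (2^{a−1}/((a+1)(a+2)))·L_a·r^{1+a}·‖u‖^{2+a}. -/

import Mathlib

open scoped RealInnerProductSpace
open intervalIntegral

/-- If `f : ℝ^d → ℝ` is twice continuously differentiable with `a`-Hölder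
continuous Hessian (constant `L_a > 0`, exponent `a > 0`), then for every `x`, every nonzero
`u`, and every `r > 0`, the first-order central finite difference
`d_r(x;u) = (f(x+ru) − f(x−ru))/(2r)` satisfies
`|d_r(x;u) − uᵀ∇f(x)| ≤ (2^{a−1}/((a+1)(a+2)))·L_a·r^{1+a}·‖u‖^{2+a}`. -/
theorem first_order_central_difference_error (d : ℕ)
    (f : EuclideanSpace ℝ (Fin d) → ℝ) (hf : ContDiff ℝ 2 f)
    (a La : ℝ) (ha : 0 < a) (hLa : 0 < La)
    (hHolder : ∀ x y u : EuclideanSpace ℝ (Fin d),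
      |iteratedFDeriv ℝ 2 f x ![u, u] - iteratedFDeriv ℝ 2 f y ![u, u]| ≤
        La * ‖x - y‖ ^ a * ‖u‖ ^ 2)
    (x u : EuclideanSpace ℝ (Fin d)) (hu : u ≠ 0) (r : ℝ) (hr : 0 < r) :
    |(f (x + r • u) - f (x - r • u)) / (2 * r) - ⟪gradient f x, u⟫| ≤
      2 ^ (a - 1) / ((a + 1) * (a + 2)) * La * r ^ (1 + a) * ‖u‖ ^ (2 + a) := by
  set φ : ℝ → EuclideanSpace ℝ (Fin d) := fun t => x + t • u with hφdef
  have hφ : ∀ t : ℝ, HasDerivAt φ u t := by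
    intro t
    have := ((hasDerivAt_id t).smul_const u).const_add x
    simp only [id, one_smul] at this
    exact this
  set g1 : ℝ → ℝ := fun t => fderiv ℝ f (φ t) u with hg1def
  set g2 : ℝ → ℝ := fun t => iteratedFDeriv ℝ 2 f (φ t) ![u, u] with hg2def
  have hfd : Differentiable ℝ f := hf.differentiable (by norm_num)
  have hf' : ContDiff ℝ 1 (fderiv ℝ f) := hf.fderiv_right (by norm_num)
  have hder1 : ∀ t : ℝ, HasDerivAt (fun t => f (φ t)) (g1 t) t := fun t =>
    (hfd (φ t)).hasFDerivAt.comp_hasDerivAt t (hφ t)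
  have hder2 : ∀ t : ℝ, HasDerivAt g1 (g2 t) t := by
    intro t
    have h1 : HasFDerivAt (fderiv ℝ f) (fderiv ℝ (fderiv ℝ f) (φ t)) (φ t) :=
      ((hf'.differentiable one_ne_zero) (φ t)).hasFDerivAt
    have h2 : HasDerivAt (fun s => fderiv ℝ f (φ s)) (fderiv ℝ (fderiv ℝ f) (φ t) u) t :=
      h1.comp_hasDerivAt t (hφ t)
    have h3 := h2.clm_apply (hasDerivAt_const t u)
    simp only [map_zero, add_zero] at h3
    have he : g2 t = fderiv ℝ (fderiv ℝ f) (φ t) u u := by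
      show iteratedFDeriv ℝ 2 f (φ t) ![u, u] = _
      rw [iteratedFDeriv_two_apply]; simp
    rw [he]
    exact h3
  have hφc : Continuous φ := by fun_prop
  have hg1c : Continuous g1 :=
    (ContinuousLinearMap.apply ℝ ℝ u).continuous.comp ((hf'.continuous).comp hφc)
  have hg2c : Continuous g2 := by
    have h := (hf.continuous_iteratedFDeriv (m := 2) le_rfl).comp hφc
    exact (ContinuousMultilinearMap.apply ℝ (fun _ : Fin 2 => EuclideanSpace ℝ (Fin d)) ℝ
      ![u, u]).continuous.comp h
  -- gradient term equals g1 0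
  have hu' : (0:ℝ) < ‖u‖ := norm_pos_iff.mpr hu
  have hφ0 : φ 0 = x := by simp [hφdef]
  have hgrad : ⟪gradient f x, u⟫ = g1 0 := by
    rw [hg1def]
    simp only [hφ0]
    exact InnerProductSpace.toDual_symm_apply
  have hφr : φ r = x + r • u := rfl
  have hφnr : φ (-r) = x - r • u := by
    simp [hφdef, neg_smul, sub_eq_add_neg]
  set ψ : ℝ → ℝ := fun t => (g1 t - g1 0) + (g1 (-t) - g1 0) with hψdef
  have hψc : Continuous ψ := by fun_prop
  have hint1 : ∫ t in (-r)..r, g1 t = f (φ r) - f (φ (-r)) :=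
    integral_eq_sub_of_hasDerivAt (fun t _ => hder1 t) (hg1c.intervalIntegrable _ _)
  have key : f (φ r) - f (φ (-r)) - 2 * r * g1 0 = ∫ t in (0:ℝ)..r, ψ t := by
    have hi : ∀ p q : ℝ, IntervalIntegrable (fun t => g1 t - g1 0) MeasureTheory.volume p q :=
      fun p q => ((hg1c.sub continuous_const).intervalIntegrable _ _)
    have h2 : ∫ t in (-r)..r, (g1 t - g1 0) = f (φ r) - f (φ (-r)) - 2 * r * g1 0 := by
      rw [intervalIntegral.integral_sub (hg1c.intervalIntegrable _ _) intervalIntegrable_const,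
        hint1, intervalIntegral.integral_const]
      simp only [smul_eq_mul]
      ring
    have h3 : ∫ t in (-r)..r, (g1 t - g1 0) =
        (∫ t in (-r)..(0:ℝ), (g1 t - g1 0)) + ∫ t in (0:ℝ)..r, (g1 t - g1 0) :=
      (intervalIntegral.integral_add_adjacent_intervals (hi _ _) (hi _ _)).symm
    have h4 : (∫ t in (0:ℝ)..r, (g1 (-t) - g1 0)) = ∫ t in (-r)..(0:ℝ), (g1 t - g1 0) := by
      have := intervalIntegral.integral_comp_neg (a := 0) (b := r) (fun t => g1 t - g1 0)
      simpa using this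
    have h5 : ∫ t in (0:ℝ)..r, ψ t =
        (∫ t in (0:ℝ)..r, (g1 t - g1 0)) + ∫ t in (0:ℝ)..r, (g1 (-t) - g1 0) :=
      intervalIntegral.integral_add (hi 0 r)
        (Continuous.intervalIntegrable (by fun_prop) 0 r)
    rw [h5, h4, ← h2, h3]
    ring
  -- derivative of ψ
  set δ : ℝ → ℝ := fun s => g2 s - g2 (-s) with hδdef
  have hδc : Continuous δ := by fun_prop
  have hψder : ∀ s : ℝ, HasDerivAt ψ (δ s) s := by
    intro s
    have h1 : HasDerivAt (fun t => g1 (-t)) (g2 (-s) * (-1)) s :=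
      (hder2 (-s)).comp s (hasDerivAt_neg s)
    have h2 := ((hder2 s).sub_const (g1 0)).add (h1.sub_const (g1 0))
    convert h2 using 1
    · rfl
    · rfl
    · rfl
    · simp [hδdef]; ring
  -- Hölder bound on δ
  set C : ℝ := La * 2 ^ a * ‖u‖ ^ (a + 2) with hCdef
  have hC : 0 < C := by positivity
  have hδbound : ∀ s : ℝ, 0 ≤ s → |δ s| ≤ C * s ^ a := by
    intro s hs
    have h1 := hHolder (φ s) (φ (-s)) u
    have h2 : φ s - φ (-s) = (2 * s) • u := by
      simp [hφdef]
      module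
    have h3 : ‖φ s - φ (-s)‖ = 2 * s * ‖u‖ := by
      rw [h2, norm_smul, Real.norm_eq_abs, abs_of_nonneg (mul_nonneg two_pos.le hs)]
    rw [h3] at h1
    have h4 : (2 * s * ‖u‖) ^ a = 2 ^ a * s ^ a * ‖u‖ ^ a := by
      rw [Real.mul_rpow (mul_nonneg two_pos.le hs) (norm_nonneg u),
        Real.mul_rpow two_pos.le hs]
    have hsplit : ‖u‖ ^ (a + 2) = ‖u‖ ^ a * ‖u‖ ^ (2:ℕ) := by
      rw [← Real.rpow_natCast ‖u‖ 2, ← Real.rpow_add hu']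
      norm_num
    have h5 : La * (2 * s * ‖u‖) ^ a * ‖u‖ ^ 2 = C * s ^ a := by
      rw [h4, hCdef, hsplit]
      ring
    rw [h5] at h1
    exact h1
  -- bound on ψ
  have hψbound : ∀ t : ℝ, 0 ≤ t → |ψ t| ≤ C / (a + 1) * t ^ (a + 1) := by
    intro t ht
    have hid : ∫ s in (0:ℝ)..t, δ s = ψ t := by
      have := integral_eq_sub_of_hasDerivAt (fun s _ => hψder s) (hδc.intervalIntegrable 0 t)
      simpa [hψdef] using this
    have h1 : |ψ t| ≤ ∫ s in (0:ℝ)..t, |δ s| := by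
      rw [← hid]
      exact intervalIntegral.abs_integral_le_integral_abs ht
    have h2 : (∫ s in (0:ℝ)..t, |δ s|) ≤ ∫ s in (0:ℝ)..t, C * s ^ a := by
      apply intervalIntegral.integral_mono_on ht
        (hδc.abs.intervalIntegrable _ _)
        ((intervalIntegrable_rpow (Or.inl ha.le)).const_mul C)
      intro s hs
      exact hδbound s hs.1
    have h3 : (∫ s in (0:ℝ)..t, C * s ^ a) = C / (a + 1) * t ^ (a + 1) := by
      rw [intervalIntegral.integral_const_mul, integral_rpow (Or.inl (by linarith))]
      rw [Real.zero_rpow (by positivity)]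
      ring
    calc |ψ t| ≤ _ := h1
      _ ≤ _ := h2
      _ = _ := h3
  -- final bound
  have hI : |∫ t in (0:ℝ)..r, ψ t| ≤ C / (a + 1) * (r ^ (a + 2) / (a + 2)) := by
    have h1 : |∫ t in (0:ℝ)..r, ψ t| ≤ ∫ t in (0:ℝ)..r, |ψ t| :=
      intervalIntegral.abs_integral_le_integral_abs hr.le
    have h2 : (∫ t in (0:ℝ)..r, |ψ t|) ≤ ∫ t in (0:ℝ)..r, C / (a + 1) * t ^ (a + 1) := by
      apply intervalIntegral.integral_mono_on hr.le
        (hψc.abs.intervalIntegrable _ _)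
        ((intervalIntegrable_rpow (Or.inl (by linarith))).const_mul _)
      intro t htm
      exact hψbound t htm.1
    have h3 : (∫ t in (0:ℝ)..r, C / (a + 1) * t ^ (a + 1))
        = C / (a + 1) * (r ^ (a + 2) / (a + 2)) := by
      rw [intervalIntegral.integral_const_mul, integral_rpow (Or.inl (by linarith))]
      rw [Real.zero_rpow (by positivity)]
      have : a + 1 + 1 = a + 2 := by ring
      rw [this]
      ring
    linarith
  have hexpr : (f (x + r • u) - f (x - r • u)) / (2 * r) - ⟪gradient f x, u⟫
      = (∫ t in (0:ℝ)..r, ψ t) / (2 * r) := by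
    rw [hgrad, ← hφr, ← hφnr, ← key]
    field_simp
  rw [hexpr, abs_div, abs_of_pos (by linarith : (0:ℝ) < 2 * r)]
  rw [div_le_iff₀ (by linarith : (0:ℝ) < 2 * r)]
  have hRHS : 2 ^ (a - 1) / ((a + 1) * (a + 2)) * La * r ^ (1 + a) * ‖u‖ ^ (2 + a) * (2 * r)
      = C / (a + 1) * (r ^ (a + 2) / (a + 2)) := by
    rw [hCdef]
    have e1 : (2:ℝ) ^ (a - 1) = 2 ^ a / 2 := by
      rw [Real.rpow_sub two_pos, Real.rpow_one]
    have e2 : r ^ (a + 2) = r ^ (1 + a) * r := by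
      have : a + 2 = (1 + a) + 1 := by ring
      rw [this, Real.rpow_add hr, Real.rpow_one]
    have e3 : ‖u‖ ^ (a + 2) = ‖u‖ ^ (2 + a) := by rw [add_comm]
    rw [e1, e2, e3]
    field_simp
  calc |∫ t in (0:ℝ)..r, ψ t| ≤ C / (a + 1) * (r ^ (a + 2) / (a + 2)) := hI
    _ = _ := hRHS.symm
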